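/- Let S_W, S_B be real symmetric d×d matrices with eigenvalues ν_1 ≥ ... ≥ ν_d and μ_1 ≥ ... ≥ μ_d respectively, and let λ_1(M) ≥ ... ≥ λ_d(M) be the eigenvalues of M = exp(−S_W/2)·exp(S_B)·exp(−S_W/2). Then for each i, exp(μ_i − ν_1) ≤ λ_i(M) ≤ exp(μ_i − ν_d). -/

import Mathlib

open Matrix NormedSpace Polynomial
open scoped Nat

attribute [local instance] Matrix.linftyOpNormedRing Matrix.linftyOpNormedAlgebra

namespace EigBounds

variable {d : ℕ}

lemma exp_mulVec (A : Matrix (Fin d) (Fin d) ℝ) (v : Fin d → ℝ) (t : ℝ)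
    (h : A *ᵥ v = t • v) : NormedSpace.exp A *ᵥ v = Real.exp t • v := by
  have hpow : ∀ n : ℕ, A ^ n *ᵥ v = t ^ n • v := by
    intro n
    induction n with
    | zero => simp
    | succ n ih =>
      rw [pow_succ', ← mulVec_mulVec, ih, mulVec_smul, h, smul_smul, ← pow_succ]
  let L : Matrix (Fin d) (Fin d) ℝ →ₗ[ℝ] (Fin d → ℝ) :=
    { toFun := fun M => M *ᵥ v
      map_add' := fun M N => add_mulVec M N v
      map_smul' := fun c M => smul_mulVec c M v }
  have hLcont : Continuous L := L.continuous_of_finiteDimensional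
  have hsum : Summable fun n : ℕ => ((n !: ℝ))⁻¹ • A ^ n := expSeries_summable' A
  have h1 : NormedSpace.exp A *ᵥ v = ∑' n : ℕ, ((n !: ℝ))⁻¹ • (A ^ n *ᵥ v) := by
    have := (⟨L, hLcont⟩ : Matrix (Fin d) (Fin d) ℝ →L[ℝ] (Fin d → ℝ)).map_tsum hsum
    simpa [exp_eq_tsum ℝ, L] using this
  rw [h1]
  have h2 : ∀ n : ℕ, ((n !: ℝ))⁻¹ • (A ^ n *ᵥ v) = (((n !: ℝ))⁻¹ * t ^ n) • v := by
    intro n; rw [hpow n, smul_smul]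
  rw [tsum_congr h2, Summable.tsum_smul_const]
  · congr 1
    rw [Real.exp_eq_exp_ℝ, exp_eq_tsum ℝ]
    simp [smul_eq_mul]
  · simpa [smul_eq_mul] using (Real.summable_pow_div_factorial t).congr
      (fun n => by rw [div_eq_inv_mul])

lemma exp_mul_exp_neg (A : Matrix (Fin d) (Fin d) ℝ) :
    NormedSpace.exp A * NormedSpace.exp (-A) = 1 := by
  rw [← Matrix.exp_add_of_commute A (-A) ((Commute.refl A).neg_right), add_neg_cancel,
    exp_zero]

lemma exp_neg_mul_exp (A : Matrix (Fin d) (Fin d) ℝ) :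
    NormedSpace.exp (-A) * NormedSpace.exp A = 1 := by
  rw [← Matrix.exp_add_of_commute (-A) A ((Commute.refl A).neg_left), neg_add_cancel,
    exp_zero]

lemma dot_sum (v : Fin d → ℝ) (f : Fin d → Fin d → ℝ) :
    v ⬝ᵥ (∑ j, f j) = ∑ j, v ⬝ᵥ f j := by
  simp only [dotProduct, Finset.sum_apply, Finset.mul_sum]
  rw [Finset.sum_comm]

lemma qf_expand (A : Matrix (Fin d) (Fin d) ℝ)
    (u : OrthonormalBasis (Fin d) ℝ (EuclideanSpace ℝ (Fin d))) (a : Fin d → ℝ)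
    (hu : ∀ j, A *ᵥ ⇑(u j) = a j • ⇑(u j)) (x : EuclideanSpace ℝ (Fin d)) :
    (x : Fin d → ℝ) ⬝ᵥ (A *ᵥ (x : Fin d → ℝ)) =
      ∑ j, a j * (inner ℝ (u j) x : ℝ) ^ 2 := by
  set c : Fin d → ℝ := fun j => (inner ℝ (u j) x : ℝ) with hc
  have hx : (∑ j, c j • u j : EuclideanSpace ℝ (Fin d)) = x := by
    simpa [hc, u.repr_apply_apply] using u.sum_repr x
  have hdot : ∀ j, (x : Fin d → ℝ) ⬝ᵥ ⇑(u j) = c j := by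
    intro j
    simp [hc, PiLp.inner_apply, RCLike.inner_apply, dotProduct, mul_comm]
  have h1 : A *ᵥ (x : Fin d → ℝ) = ∑ j, (c j * a j) • ⇑(u j) := by
    conv_lhs => rw [← hx]
    have h2 : A *ᵥ (∑ j, c j • ⇑(u j)) = ∑ j, c j • (A *ᵥ ⇑(u j)) := by
      simpa only [Matrix.mulVecLin_apply, _root_.map_smul, Matrix.mulVec_smul] using
        map_sum (Matrix.mulVecLin A) (fun j => c j • ⇑(u j)) Finset.univ
    rw [show ((∑ j, c j • u j : EuclideanSpace ℝ (Fin d)) : Fin d → ℝ)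
        = ∑ j, c j • ⇑(u j) from by simp [WithLp.ofLp_sum], h2]
    refine Finset.sum_congr rfl fun j _ => ?_
    rw [hu j, smul_smul, mul_comm]
  rw [h1, dot_sum]
  refine Finset.sum_congr rfl fun j _ => ?_
  rw [dotProduct_smul, smul_eq_mul, hdot j]
  ring

lemma parseval (u : OrthonormalBasis (Fin d) ℝ (EuclideanSpace ℝ (Fin d)))
    (x : EuclideanSpace ℝ (Fin d)) :
    (x : Fin d → ℝ) ⬝ᵥ (x : Fin d → ℝ) = ∑ j, (inner ℝ (u j) x : ℝ) ^ 2 := by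
  have := qf_expand (1 : Matrix (Fin d) (Fin d) ℝ) u (fun _ => 1) (fun j => by simp) x
  simpa using this

lemma psd_of_eigenbasis {A : Matrix (Fin d) (Fin d) ℝ} (hA : A.IsHermitian)
    (u : OrthonormalBasis (Fin d) ℝ (EuclideanSpace ℝ (Fin d))) (a : Fin d → ℝ)
    (hu : ∀ j, A *ᵥ ⇑(u j) = a j • ⇑(u j)) (ha : ∀ j, 0 ≤ a j) : A.PosSemidef := by
  refine PosSemidef.of_dotProduct_mulVec_nonneg hA fun x => ?_
  rw [star_trivial]
  calc (0:ℝ) ≤ ∑ j, a j * (inner ℝ (u j) ((WithLp.equiv 2 (Fin d → ℝ)).symm x) : ℝ) ^ 2 :=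
        Finset.sum_nonneg fun j _ => mul_nonneg (ha j) (sq_nonneg _)
    _ = x ⬝ᵥ A *ᵥ x := (qf_expand A u a hu ((WithLp.equiv 2 (Fin d → ℝ)).symm x)).symm

lemma card_gt (i : Fin d) : Fintype.card {j : Fin d // i < j} = d - 1 - i := by
  rw [Fintype.card_subtype]
  rw [show Finset.filter (fun j => i < j) Finset.univ = Finset.Ioi i from by ext; simp]
  exact Fin.card_Ioi i

lemma card_lt (i : Fin d) : Fintype.card {j : Fin d // j < i} = i := by
  rw [Fintype.card_subtype]
  rw [show Finset.filter (fun j => j < i) Finset.univ = Finset.Iio i from by ext; simp]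
  exact Fin.card_Iio i

lemma exists_null (u w : OrthonormalBasis (Fin d) ℝ (EuclideanSpace ℝ (Fin d))) (i : Fin d) :
    ∃ x : EuclideanSpace ℝ (Fin d), x ≠ 0 ∧ (∀ j, i < j → (inner ℝ (u j) x : ℝ) = 0) ∧
      (∀ j, j < i → (inner ℝ (w j) x : ℝ) = 0) := by
  let L : EuclideanSpace ℝ (Fin d) →ₗ[ℝ]
      ({j : Fin d // i < j} → ℝ) × ({j : Fin d // j < i} → ℝ) :=
    LinearMap.prod
      (LinearMap.pi fun j => (innerSL ℝ (u j.1)).toLinearMap)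
      (LinearMap.pi fun j => (innerSL ℝ (w j.1)).toLinearMap)
  have hinj : ¬ Function.Injective L := by
    intro hinj
    have h1 := LinearMap.finrank_le_finrank_of_injective hinj
    rw [finrank_euclideanSpace, Fintype.card_fin] at h1
    have h2 : Module.finrank ℝ (({j : Fin d // i < j} → ℝ) × ({j : Fin d // j < i} → ℝ))
        = (d - 1 - i) + i := by
      rw [Module.finrank_prod, Module.finrank_pi, Module.finrank_pi, card_gt, card_lt]
    rw [h2] at h1
    have hile : (i : ℕ) ≤ d - 1 := Nat.le_pred_of_lt i.isLt
    omega
  rw [Function.not_injective_iff] at hinj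
  obtain ⟨p, q, hpq, hne⟩ := hinj
  refine ⟨p - q, sub_ne_zero_of_ne hne, ?_, ?_⟩
  · intro j hj
    have := congrFun (congrArg Prod.fst hpq) ⟨j, hj⟩
    simp only [L, LinearMap.prod_apply, Function.prod, LinearMap.pi_apply,
      ContinuousLinearMap.coe_coe, innerSL_apply_apply] at this
    rw [inner_sub_right, this, sub_self]
  · intro j hj
    have := congrFun (congrArg Prod.snd hpq) ⟨j, hj⟩
    simp only [L, LinearMap.prod_apply, Function.prod, LinearMap.pi_apply,
      ContinuousLinearMap.coe_coe, innerSL_apply_apply] at this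
    rw [inner_sub_right, this, sub_self]

lemma eig_le_eig (A B : Matrix (Fin d) (Fin d) ℝ)
    (u w : OrthonormalBasis (Fin d) ℝ (EuclideanSpace ℝ (Fin d))) (a b : Fin d → ℝ)
    (hua : ∀ j, A *ᵥ ⇑(u j) = a j • ⇑(u j)) (hwb : ∀ j, B *ᵥ ⇑(w j) = b j • ⇑(w j))
    (haA : Antitone a) (hbA : Antitone b) (hBA : (B - A).PosSemidef) (i : Fin d) :
    a i ≤ b i := by
  obtain ⟨x, hx0, hU, hW⟩ := exists_null u w i
  have hs : (0:ℝ) < (x : Fin d → ℝ) ⬝ᵥ (x : Fin d → ℝ) := by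
    obtain ⟨k, hk⟩ : ∃ k, (x : Fin d → ℝ) k ≠ 0 := by
      by_contra h
      push_neg at h
      exact hx0 (by ext k; exact h k)
    exact Finset.sum_pos' (fun j _ => mul_self_nonneg _)
      ⟨k, Finset.mem_univ k, mul_self_pos.2 hk⟩
  have hQA : a i * ((x : Fin d → ℝ) ⬝ᵥ (x : Fin d → ℝ)) ≤
      (x : Fin d → ℝ) ⬝ᵥ (A *ᵥ (x : Fin d → ℝ)) := by
    rw [qf_expand A u a hua x, parseval u x, Finset.mul_sum]
    refine Finset.sum_le_sum fun j _ => ?_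
    rcases le_or_gt j i with hj | hj
    · exact mul_le_mul_of_nonneg_right (haA hj) (sq_nonneg _)
    · simp [hU j hj]
  have hQB : (x : Fin d → ℝ) ⬝ᵥ (B *ᵥ (x : Fin d → ℝ)) ≤
      b i * ((x : Fin d → ℝ) ⬝ᵥ (x : Fin d → ℝ)) := by
    rw [qf_expand B w b hwb x, parseval w x, Finset.mul_sum]
    refine Finset.sum_le_sum fun j _ => ?_
    rcases le_or_gt i j with hj | hj
    · exact mul_le_mul_of_nonneg_right (hbA hj) (sq_nonneg _)
    · simp [hW j hj]
  have hAB : (x : Fin d → ℝ) ⬝ᵥ (A *ᵥ (x : Fin d → ℝ)) ≤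
      (x : Fin d → ℝ) ⬝ᵥ (B *ᵥ (x : Fin d → ℝ)) := by
    have h0 := hBA.dotProduct_mulVec_nonneg (x : Fin d → ℝ)
    rw [star_trivial, Matrix.sub_mulVec, dotProduct_sub] at h0
    linarith
  exact le_of_mul_le_mul_right (by linarith) hs

lemma perm_multiset (f : Fin d → ℝ) (σ : Equiv.Perm (Fin d)) :
    Multiset.map (f ∘ σ) Finset.univ.val = Multiset.map f Finset.univ.val := by
  rw [← Multiset.map_map]
  congr 1
  calc Finset.univ.val.map ⇑σ = (Finset.univ.map σ.toEmbedding).val := by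
        rw [Finset.map_val]; rfl
    _ = Finset.univ.val := by rw [Finset.map_univ_equiv]

lemma antitone_le' (f g : Fin d → ℝ) (hf : Antitone f) (hg : Antitone g)
    (h : Multiset.map f Finset.univ.val = Multiset.map g Finset.univ.val) (i : Fin d) :
    f i ≤ g i := by
  by_contra hlt
  push_neg at hlt
  set t := f i with ht
  have A1 : Finset.Iic i ⊆ Finset.filter (fun j => t ≤ f j) Finset.univ := by
    intro j hj
    simp only [Finset.mem_filter, Finset.mem_univ, true_and]
    exact hf (Finset.mem_Iic.mp hj)
  have A2 : Finset.filter (fun j => t ≤ g j) Finset.univ ⊆ Finset.Iio i := by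
    intro j hj
    simp only [Finset.mem_filter, Finset.mem_univ, true_and] at hj
    rw [Finset.mem_Iio]
    by_contra hij
    push_neg at hij
    exact absurd (le_trans hj (hg hij)) (not_le.mpr hlt)
  have hcount : (Finset.filter (fun j => t ≤ f j) Finset.univ).card =
      (Finset.filter (fun j => t ≤ g j) Finset.univ).card := by
    have hc := congrArg (Multiset.countP (fun x => t ≤ x)) h
    rw [Multiset.countP_map, Multiset.countP_map] at hc
    simpa [Finset.card, Finset.filter_val] using hc
  have c1 := Finset.card_le_card A1
  have c2 := Finset.card_le_card A2
  rw [Fin.card_Iic] at c1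
  rw [Fin.card_Iio] at c2
  omega

lemma antitone_eq (f g : Fin d → ℝ) (hf : Antitone f) (hg : Antitone g)
    (h : Multiset.map f Finset.univ.val = Multiset.map g Finset.univ.val) : f = g :=
  funext fun i => le_antisymm (antitone_le' f g hf hg h i) (antitone_le' g f hg hf h.symm i)

lemma exists_antitone_perm (f : Fin d → ℝ) :
    ∃ τ : Equiv.Perm (Fin d), Antitone (f ∘ τ) := by
  refine ⟨(Fin.revPerm).trans (Tuple.sort f), fun j k hjk => ?_⟩
  have hm := Tuple.monotone_sort f
  exact hm (by simpa using Fin.rev_le_rev.mpr hjk)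

lemma charpoly_conj_eq (V D W : Matrix (Fin d) (Fin d) ℝ) (hVW : V * W = 1)
    (hWV : W * V = 1) : (V * D * W).charpoly = D.charpoly := by
  unfold Matrix.charpoly
  have hmap : (charmatrix (V * D * W)) =
      (C : ℝ →+* ℝ[X]).mapMatrix V * charmatrix D * (C : ℝ →+* ℝ[X]).mapMatrix W := by
    unfold charmatrix
    have hcV : Commute (Matrix.scalar (Fin d) (X : ℝ[X])) ((C : ℝ →+* ℝ[X]).mapMatrix V) :=
      Matrix.scalar_commute _ (fun r' => Commute.all _ _) _
    rw [mul_sub, sub_mul, _root_.map_mul, _root_.map_mul]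
    congr 1
    rw [← hcV.eq, mul_assoc, ← _root_.map_mul, hVW, _root_.map_one, mul_one]
  rw [hmap, det_mul, det_mul]
  have hdet : ((C : ℝ →+* ℝ[X]).mapMatrix V).det * ((C : ℝ →+* ℝ[X]).mapMatrix W).det = 1 := by
    rw [mul_comm, ← det_mul, ← _root_.map_mul, hWV, _root_.map_one, det_one]
  calc ((C : ℝ →+* ℝ[X]).mapMatrix V).det * (charmatrix D).det *
        ((C : ℝ →+* ℝ[X]).mapMatrix W).det
      = (charmatrix D).det * (((C : ℝ →+* ℝ[X]).mapMatrix V).det *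
        ((C : ℝ →+* ℝ[X]).mapMatrix W).det) := by ring
    _ = (charmatrix D).det := by rw [hdet, mul_one]

lemma charpoly_diagonal_roots (v : Fin d → ℝ) :
    (Matrix.diagonal v).charpoly.roots = Finset.univ.val.map v := by
  have h1 : (Matrix.diagonal v).charpoly = ∏ i, (X - C (v i)) := by
    unfold Matrix.charpoly charmatrix
    have hdg : Matrix.scalar (Fin d) (X : ℝ[X]) -
        (C : ℝ →+* ℝ[X]).mapMatrix (Matrix.diagonal v)
        = Matrix.diagonal (fun i => (X : ℝ[X]) - C (v i)) := by
      rw [show (Matrix.scalar (Fin d) (X : ℝ[X])) = Matrix.diagonal (fun _ => (X:ℝ[X])) from rfl]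
      rw [RingHom.mapMatrix_apply, Matrix.diagonal_map (map_zero C), Matrix.diagonal_sub]
    rw [hdg, det_diagonal]
  rw [h1]
  have h2 : (∏ i, ((X : ℝ[X]) - C (v i)))
      = ((Finset.univ.val.map v).map (fun a => (X:ℝ[X]) - C a)).prod := by
    rw [Multiset.map_map]
    rfl
  rw [h2, roots_multiset_prod_X_sub_C]

lemma hermitian_roots {P : Matrix (Fin d) (Fin d) ℝ} (hP : P.IsHermitian) :
    P.charpoly.roots = Finset.univ.val.map hP.eigenvalues := by
  have hst := hP.spectral_theorem
  have h1 : (hP.eigenvectorUnitary : Matrix (Fin d) (Fin d) ℝ) *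
      star (hP.eigenvectorUnitary : Matrix (Fin d) (Fin d) ℝ) = 1 :=
    (Matrix.mem_unitaryGroup_iff).mp hP.eigenvectorUnitary.2
  have h2 : star (hP.eigenvectorUnitary : Matrix (Fin d) (Fin d) ℝ) *
      (hP.eigenvectorUnitary : Matrix (Fin d) (Fin d) ℝ) = 1 :=
    (Matrix.mem_unitaryGroup_iff').mp hP.eigenvectorUnitary.2
  have hid : (RCLike.ofReal ∘ hP.eigenvalues : Fin d → ℝ) = hP.eigenvalues := by
    funext j; simp
  have hcp := congrArg (fun Q : Matrix (Fin d) (Fin d) ℝ => Q.charpoly) hst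
  simp only [Unitary.conjStarAlgAut_apply] at hcp
  rw [charpoly_conj_eq _ _ _ h1 h2] at hcp
  rw [hcp, hid, charpoly_diagonal_roots]

end EigBounds

open EigBounds


open Matrix

/-- Eigenvalue bounds: with `ν`, `μ`, `lam` the decreasingly-ordered eigenvalues of
`S_W`, `S_B` and `M = exp(−S_W/2)·exp(S_B)·exp(−S_W/2)` respectively, one has
`exp(μ_i − ν_1) ≤ λ_i(M) ≤ exp(μ_i − ν_d)`. -/
theorem eigenvalue_bounds_one {d : ℕ} (SW SB : Matrix (Fin d) (Fin d) ℝ)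
    (hW : SW.IsHermitian) (hB : SB.IsHermitian)
    (hM : (NormedSpace.exp (-((1 / 2 : ℝ) • SW)) * NormedSpace.exp SB *
        NormedSpace.exp (-((1 / 2 : ℝ) • SW))).IsHermitian)
    (ν μ lam : Fin d → ℝ)
    (hν : Antitone ν) (hμ : Antitone μ) (hlam : Antitone lam)
    (hνe : ∃ σ : Equiv.Perm (Fin d), ν = hW.eigenvalues ∘ σ)
    (hμe : ∃ σ : Equiv.Perm (Fin d), μ = hB.eigenvalues ∘ σ)
    (hlame : ∃ σ : Equiv.Perm (Fin d), lam = hM.eigenvalues ∘ σ)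
    (i : Fin d) :
    Real.exp (μ i - ν ⟨0, i.pos⟩) ≤ lam i ∧
      lam i ≤ Real.exp (μ i - ν ⟨d - 1, Nat.sub_lt i.pos Nat.one_pos⟩) := by
  obtain ⟨σν, hσν⟩ := hνe
  obtain ⟨σμ, hσμ⟩ := hμe
  obtain ⟨σM, hσM⟩ := hlame
  set i0 : Fin d := ⟨0, i.pos⟩ with hi0
  set i1 : Fin d := ⟨d - 1, Nat.sub_lt i.pos Nat.one_pos⟩ with hi1
  set c : ℝ := Real.exp (-ν i0) with hc
  set c' : ℝ := Real.exp (-ν i1) with hc'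
  have hcpos : 0 < c := Real.exp_pos _
  set C : Matrix (Fin d) (Fin d) ℝ := NormedSpace.exp (-((1 / 2 : ℝ) • SW)) with hCdef
  set F : Matrix (Fin d) (Fin d) ℝ := NormedSpace.exp ((1 / 2 : ℝ) • SB) with hFdef
  set Ci : Matrix (Fin d) (Fin d) ℝ := NormedSpace.exp ((1 / 2 : ℝ) • SW) with hCidef
  set Fi : Matrix (Fin d) (Fin d) ℝ := NormedSpace.exp (-((1 / 2 : ℝ) • SB)) with hFidef
  -- hermitian facts
  have hhalfB : (((1:ℝ)/2) • SB).IsHermitian := by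
    show _ᴴ = _
    rw [conjTranspose_smul, hB.eq, star_trivial]
  have hF : F.IsHermitian := Matrix.IsHermitian.exp hhalfB
  have hnegWherm : (-SW).IsHermitian := hW.neg
  have hexpWherm : (NormedSpace.exp (-SW)).IsHermitian :=
    Matrix.IsHermitian.exp hnegWherm
  -- product identities
  have hCC : C * C = NormedSpace.exp (-SW) := by
    rw [hCdef, ← Matrix.exp_add_of_commute _ _ (Commute.refl _)]
    congr 1
    module
  have hFF : F * F = NormedSpace.exp SB := by
    rw [hFdef, ← Matrix.exp_add_of_commute _ _ (Commute.refl _)]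
    congr 1
    module
  have hCiC : Ci * C = 1 := exp_mul_exp_neg _
  have hCCi : C * Ci = 1 := exp_neg_mul_exp _
  have hFiF : Fi * F = 1 := exp_neg_mul_exp _
  have hFFi : F * Fi = 1 := exp_mul_exp_neg _
  -- eigorthonormal bases
  set uν : OrthonormalBasis (Fin d) ℝ (EuclideanSpace ℝ (Fin d)) :=
    hW.eigenvectorBasis.reindex σν.symm with huνdef
  set uμ : OrthonormalBasis (Fin d) ℝ (EuclideanSpace ℝ (Fin d)) :=
    hB.eigenvectorBasis.reindex σμ.symm with huμdef
  have huν : ∀ j, SW *ᵥ ⇑(uν j) = ν j • ⇑(uν j) := by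
    intro j
    rw [hσν]
    simpa [huνdef, OrthonormalBasis.reindex_apply] using hW.mulVec_eigenvectorBasis (σν j)
  have huμ : ∀ j, SB *ᵥ ⇑(uμ j) = μ j • ⇑(uμ j) := by
    intro j
    rw [hσμ]
    simpa [huμdef, OrthonormalBasis.reindex_apply] using hB.mulVec_eigenvectorBasis (σμ j)
  have hexpW_u : ∀ j, NormedSpace.exp (-SW) *ᵥ ⇑(uν j) = Real.exp (-ν j) • ⇑(uν j) := by
    intro j
    exact exp_mulVec _ _ _ (by rw [Matrix.neg_mulVec, huν j, neg_smul])
  have hE_u : ∀ j, NormedSpace.exp SB *ᵥ ⇑(uμ j) = Real.exp (μ j) • ⇑(uμ j) := by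
    intro j
    exact exp_mulVec _ _ _ (huμ j)
  -- N and its eigen data
  set N : Matrix (Fin d) (Fin d) ℝ := F * NormedSpace.exp (-SW) * F with hNdef
  have hN : N.IsHermitian := by
    have h := Matrix.isHermitian_conjTranspose_mul_mul F hexpWherm
    rwa [hF.eq] at h
  obtain ⟨τ, hτ⟩ := exists_antitone_perm hN.eigenvalues
  set wN : OrthonormalBasis (Fin d) ℝ (EuclideanSpace ℝ (Fin d)) :=
    hN.eigenvectorBasis.reindex τ.symm with hwNdef
  have hwN : ∀ j, N *ᵥ ⇑(wN j) = (hN.eigenvalues ∘ τ) j • ⇑(wN j) := by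
    intro j
    simpa [hwNdef, OrthonormalBasis.reindex_apply] using hN.mulVec_eigenvectorBasis (τ j)
  -- positive semidefiniteness
  have hsmul1herm : ∀ t : ℝ, (t • (1 : Matrix (Fin d) (Fin d) ℝ)).IsHermitian := by
    intro t
    show _ᴴ = _
    rw [conjTranspose_smul]
    simp
  have hpsd_low : (NormedSpace.exp (-SW) - c • 1).PosSemidef := by
    refine psd_of_eigenbasis (hexpWherm.sub (hsmul1herm c)) uν
      (fun j => Real.exp (-ν j) - c) (fun j => ?_) (fun j => ?_)
    · rw [Matrix.sub_mulVec, hexpW_u j, Matrix.smul_mulVec, Matrix.one_mulVec, sub_smul]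
    · have : ν j ≤ ν i0 := hν (by simp [hi0, Fin.le_def])
      simp only [hc, sub_nonneg]
      exact Real.exp_le_exp.2 (by linarith)
  have hpsd_up : (c' • 1 - NormedSpace.exp (-SW)).PosSemidef := by
    refine psd_of_eigenbasis ((hsmul1herm c').sub hexpWherm) uν
      (fun j => c' - Real.exp (-ν j)) (fun j => ?_) (fun j => ?_)
    · rw [Matrix.sub_mulVec, hexpW_u j, Matrix.smul_mulVec, Matrix.one_mulVec, sub_smul]
    · have : ν i1 ≤ ν j := hν (by simp [hi1, Fin.le_def]; omega)
      simp only [hc', sub_nonneg]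
      exact Real.exp_le_exp.2 (by linarith)
  have hsub_low : F * (NormedSpace.exp (-SW) - c • 1) * F
      = N - c • NormedSpace.exp SB := by
    rw [Matrix.mul_sub, Matrix.sub_mul, Matrix.mul_smul, mul_one, Matrix.smul_mul, hFF, hNdef]
  have hsub_up : F * (c' • 1 - NormedSpace.exp (-SW)) * F
      = c' • NormedSpace.exp SB - N := by
    rw [Matrix.mul_sub, Matrix.sub_mul, Matrix.mul_smul, mul_one, Matrix.smul_mul, hFF, hNdef]
  have hpsdN_low : (N - c • NormedSpace.exp SB).PosSemidef := by
    have h := hpsd_low.mul_mul_conjTranspose_same F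
    rw [hF.eq, hsub_low] at h
    exact h
  have hpsdN_up : (c' • NormedSpace.exp SB - N).PosSemidef := by
    have h := hpsd_up.mul_mul_conjTranspose_same F
    rw [hF.eq, hsub_up] at h
    exact h
  -- eigenvalue bounds for N's sorted eigenvalues
  have hmuAnti_low : Antitone (fun j => c * Real.exp (μ j)) := fun j k h =>
    mul_le_mul_of_nonneg_left (Real.exp_le_exp.2 (hμ h)) hcpos.le
  have hmuAnti_up : Antitone (fun j => c' * Real.exp (μ j)) := fun j k h =>
    mul_le_mul_of_nonneg_left (Real.exp_le_exp.2 (hμ h)) (Real.exp_pos _).le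
  have hlow : ∀ i' : Fin d, c * Real.exp (μ i') ≤ (hN.eigenvalues ∘ τ) i' := by
    intro i'
    refine eig_le_eig (c • NormedSpace.exp SB) N uμ wN
      (fun j => c * Real.exp (μ j)) (hN.eigenvalues ∘ τ)
      (fun j => ?_) hwN hmuAnti_low hτ hpsdN_low i'
    rw [Matrix.smul_mulVec, hE_u j, smul_smul]
  have hup : ∀ i' : Fin d, (hN.eigenvalues ∘ τ) i' ≤ c' * Real.exp (μ i') := by
    intro i'
    refine eig_le_eig N (c' • NormedSpace.exp SB) wN uμ
      (hN.eigenvalues ∘ τ) (fun j => c' * Real.exp (μ j))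
      hwN (fun j => ?_) hτ hmuAnti_up hpsdN_up i'
    rw [Matrix.smul_mulVec, hE_u j, smul_smul]
  -- lam equals sorted eigenvalues of N
  have hNM : (Fi * Ci) * (C * NormedSpace.exp SB * C) * (C * F) = N := by
    rw [← hFF, hNdef, ← hCC]
    simp only [← mul_assoc]
    rw [mul_assoc Fi Ci C, hCiC, mul_one, hFiF, one_mul]
  have hVW : (Fi * Ci) * (C * F) = 1 := by
    rw [mul_assoc, ← mul_assoc Ci C F, hCiC, one_mul, hFiF]
  have hWV : (C * F) * (Fi * Ci) = 1 := by
    rw [mul_assoc, ← mul_assoc F Fi Ci, hFFi, one_mul, hCCi]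
  have hcp : N.charpoly = (C * NormedSpace.exp SB * C).charpoly := by
    rw [← hNM]
    exact charpoly_conj_eq _ _ _ hVW hWV
  have hroots : Multiset.map hM.eigenvalues Finset.univ.val
      = Multiset.map hN.eigenvalues Finset.univ.val := by
    rw [← hermitian_roots hM, ← hermitian_roots hN, hcp]
  have hmult : Multiset.map lam Finset.univ.val
      = Multiset.map (hN.eigenvalues ∘ τ) Finset.univ.val := by
    rw [hσM, perm_multiset, hroots, perm_multiset]
  have hlamEq : lam = hN.eigenvalues ∘ τ := antitone_eq _ _ hlam hτ hmult
  constructor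
  · have h1 : Real.exp (μ i - ν i0) = c * Real.exp (μ i) := by
      rw [hc, ← Real.exp_add]
      congr 1
      ring
    rw [h1, hlamEq]
    exact hlow i
  · have h1 : Real.exp (μ i - ν i1) = c' * Real.exp (μ i) := by
      rw [hc', ← Real.exp_add]
      congr 1
      ring
    rw [h1, hlamEq]
    exact hup i
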